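/- If a K-algebra A is left algebraically amenable then its unitization à is left algebraically amenable. -/

import Mathlib

/-- `W` is a left `(F, ε)`-Følner subspace: a nonzero finite-dimensional subspace with
`dim(aW + W) ≤ (1+ε)·dim W` for all `a ∈ F`. -/
def IsFolnerSubspace (K : Type*) {A : Type*} [Field K] [NonUnitalRing A] [Module K A]
    [SMulCommClass K A A] [IsScalarTower K A A]
    (F : Finset A) (ε : ℝ) (W : Submodule K A) : Prop :=
  W ≠ ⊥ ∧ FiniteDimensional K W ∧
    ∀ a ∈ F, (Module.finrank K ↥(W.map (LinearMap.mulLeft K a) ⊔ W) : ℝ) ≤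
      (1 + ε) * (Module.finrank K ↥W : ℝ)

/-- Left algebraic amenability. -/
def AlgAmenable (K A : Type*) [Field K] [NonUnitalRing A] [Module K A]
    [SMulCommClass K A A] [IsScalarTower K A A] : Prop :=
  ∀ ε > (0:ℝ), ∀ F : Finset A, ∃ W : Submodule K A, IsFolnerSubspace K F ε W

/-- Proper left algebraic amenability. -/
def ProperlyAlgAmenable (K A : Type*) [Field K] [NonUnitalRing A] [Module K A]
    [SMulCommClass K A A] [IsScalarTower K A A] : Prop :=
  ∀ ε > (0:ℝ), ∀ F : Finset A, ∃ W : Submodule K A,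
    IsFolnerSubspace K F ε W ∧ ∀ a ∈ F, a ∈ W

set_option maxHeartbeats 800000 in
theorem stmt11 {K A : Type*} [Field K] [NonUnitalRing A] [Module K A]
    [SMulCommClass K A A] [IsScalarTower K A A]
    (h : AlgAmenable K A) : AlgAmenable K (Unitization K A) := by
  classical
  intro ε hε F
  obtain ⟨W, hW0, hWfd, hWb⟩ := h ε hε (F.image fun x : Unitization K A => x.snd)
  let ι : A →ₗ[K] Unitization K A := Unitization.inrHom K K A
  have hinj : Function.Injective ι := Unitization.inr_injective
  refine ⟨W.map ι, ?_, ?_, ?_⟩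
  · obtain ⟨w, hw, hw0⟩ := W.ne_bot_iff.mp hW0
    exact Submodule.ne_bot_iff _ |>.mpr ⟨ι w, Submodule.mem_map_of_mem hw,
      fun hz => hw0 (hinj (by simpa using hz))⟩
  · infer_instance
  · intro x hx
    have hle : (W.map ι).map (LinearMap.mulLeft K x) ⊔ W.map ι ≤
        (W.map (LinearMap.mulLeft K x.snd) ⊔ W).map ι := by
      refine sup_le ?_ (Submodule.map_mono le_sup_right)
      rintro y hy
      obtain ⟨z, ⟨w, hw, rfl⟩, rfl⟩ := hy
      have hι : ∀ z : A, ι z = Unitization.inr z := fun z => rfl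
      have : x * ι w = ι (x.fst • w + x.snd * w) := by
        rw [hι, hι]
        ext
        · simp
        · simp
      refine ⟨x.fst • w + x.snd * w, ?_, by simpa [LinearMap.mulLeft_apply] using this.symm⟩
      exact Submodule.add_mem _ (Submodule.mem_sup_right (W.smul_mem _ hw))
        (Submodule.mem_sup_left ⟨w, hw, rfl⟩)
    have hrk : Module.finrank K ↥((W.map ι).map (LinearMap.mulLeft K x) ⊔ W.map ι) ≤
        Module.finrank K ↥(W.map (LinearMap.mulLeft K x.snd) ⊔ W) := by
      have : FiniteDimensional K ↥((W.map (LinearMap.mulLeft K x.snd) ⊔ W).map ι) :=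
        inferInstance
      calc Module.finrank K ↥((W.map ι).map (LinearMap.mulLeft K x) ⊔ W.map ι)
          ≤ Module.finrank K ↥((W.map (LinearMap.mulLeft K x.snd) ⊔ W).map ι) :=
            Submodule.finrank_mono hle
        _ = Module.finrank K ↥(W.map (LinearMap.mulLeft K x.snd) ⊔ W) :=
            ((W.map (LinearMap.mulLeft K x.snd) ⊔ W).equivMapOfInjective ι hinj).finrank_eq.symm
    have hrkW : Module.finrank K ↥(W.map ι) = Module.finrank K ↥W :=
      ((W.equivMapOfInjective ι hinj).finrank_eq).symm
    rw [hrkW]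
    exact le_trans (by exact_mod_cast hrk)
      (hWb x.snd (Finset.mem_image_of_mem _ hx))
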